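/- Let X be a Tychonoff space such that C_p(X) admits a continuous linear surjection onto a metrizable locally convex space (equivalently has a metrizable quotient by a closed subspace); then that quotient is separable. In particular, every metrizable quotient of C_p(X) by a closed vector subspace is separable. -/

import Mathlib

open Filter Topology TopologicalSpace

/-- `C_p(X)`: the space `C(X, ℝ)` retopologized with the topology of pointwise
convergence (induced from the product `ℝ^X`). -/
def Cp (X : Type*) [TopologicalSpace X] : Type _ := C(X, ℝ)

instance (X : Type*) [TopologicalSpace X] : AddCommGroup (Cp X) :=
  inferInstanceAs (AddCommGroup C(X, ℝ))

noncomputable instance (X : Type*) [TopologicalSpace X] : Module ℝ (Cp X) :=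
  inferInstanceAs (Module ℝ C(X, ℝ))

/-- The underlying function of an element of `C_p(X)`. -/
def Cp.toFun {X : Type*} [TopologicalSpace X] (f : Cp X) : X → ℝ :=
  ContinuousMap.toFun f

instance (X : Type*) [TopologicalSpace X] : TopologicalSpace (Cp X) :=
  TopologicalSpace.induced Cp.toFun inferInstance

section Aux

open MeasureTheory Set
open scoped ENNReal NNReal


lemma exists_continuousMap_eqOn {X : Type*} [TopologicalSpace X] [T35Space X]
    (s : Finset X) (c : X → ℝ) : ∃ g : C(X, ℝ), ∀ x ∈ s, g x = c x := by
  classical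
  have h : ∀ x : X, x ∈ s → ∃ f : X → unitInterval, Continuous f ∧ f x = 0 ∧
      Set.EqOn f 1 (↑(s.erase x) : Set X) := by
    intro x hx
    exact CompletelyRegularSpace.completely_regular x (↑(s.erase x))
      ((s.erase x).finite_toSet.isClosed) (by simp)
  choose φ hφc hφ0 hφ1 using h
  refine ⟨⟨fun y => ∑ x ∈ s.attach, c x * (1 - (φ x x.2 y : ℝ)), ?_⟩, ?_⟩
  · exact continuous_finset_sum _ fun x _ => continuous_const.mul
      (continuous_const.sub ((continuous_subtype_val).comp (hφc x x.2)))
  · intro x₀ hx₀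
    show (∑ x ∈ s.attach, c x * (1 - (φ x x.2 x₀ : ℝ))) = c x₀
    rw [Finset.sum_eq_single ⟨x₀, hx₀⟩]
    · rw [hφ0 x₀ hx₀]; norm_num
    · rintro ⟨x, hx⟩ - hne
      have hmem : x₀ ∈ (↑(s.erase x) : Set X) := by
        simp only [Finset.coe_erase, Set.mem_diff, Finset.mem_coe]
        exact ⟨hx₀, by simpa [Subtype.ext_iff] using fun h => hne (by simp [h])⟩
      have := hφ1 x hx hmem
      simp only [Pi.one_apply] at this
      rw [this]; norm_num
    · intro h; exact absurd (Finset.mem_attach _ _) h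

noncomputable def qmeas : Measure ℝ :=
  Measure.sum (fun n : ℕ =>
    ((2:ℝ≥0∞)⁻¹ ^ (n+1)) • Measure.dirac ((Denumerable.ofNat ℚ n : ℚ) : ℝ))

lemma qmeas_univ : qmeas Set.univ = 1 := by
  rw [qmeas, Measure.sum_apply _ MeasurableSet.univ]
  simp only [Measure.smul_apply, smul_eq_mul, measure_univ, mul_one]
  rw [show (fun n : ℕ => (2:ℝ≥0∞)⁻¹ ^ (n+1)) = fun n : ℕ => 2⁻¹ * 2⁻¹ ^ n from
    funext fun n => by ring]
  rw [ENNReal.tsum_mul_left, ENNReal.tsum_geometric, ENNReal.one_sub_inv_two]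
  rw [inv_inv, ENNReal.inv_mul_cancel two_ne_zero ENNReal.ofNat_ne_top]

instance : IsProbabilityMeasure qmeas := ⟨qmeas_univ⟩

set_option maxHeartbeats 1000000 in
lemma qmeas_pos {s : Set ℝ} (q : ℚ) (hq : (q : ℝ) ∈ s) : 0 < qmeas s := by
  set n₀ : ℕ := @Encodable.encode ℚ Denumerable.toEncodable q with hn₀
  have h1 : qmeas {((q:ℚ):ℝ)} ≤ qmeas s := measure_mono (by simpa using hq)
  refine lt_of_lt_of_le (lt_of_lt_of_le
    (ENNReal.pow_pos (show (0:ℝ≥0∞) < 2⁻¹ by norm_num) (n₀ + 1)) ?_) h1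
  have h2 : qmeas {((q:ℚ):ℝ)} = ∑' n : ℕ,
      ((2:ℝ≥0∞)⁻¹ ^ (n+1)) • Measure.dirac ((Denumerable.ofNat ℚ n : ℚ) : ℝ) {((q:ℚ):ℝ)} := by
    rw [qmeas, Measure.sum_apply _ (measurableSet_singleton _)]
    rfl
  rw [h2]
  have h3 := ENNReal.le_tsum (f := fun n : ℕ =>
      ((2:ℝ≥0∞)⁻¹ ^ (n+1)) • Measure.dirac ((Denumerable.ofNat ℚ n : ℚ) : ℝ) {((q:ℚ):ℝ)})
    n₀
  refine le_trans ?_ h3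
  have he : ((Denumerable.ofNat ℚ n₀ : ℚ) : ℝ) = (q : ℝ) :=
    congrArg _ (Denumerable.ofNat_encode q)
  rw [smul_eq_mul, he, Measure.dirac_apply_of_mem (Set.mem_singleton _), mul_one]

lemma exists_rat_Ioo {O : Set ℝ} (hO : IsOpen O) {y : ℝ} (hy : y ∈ O) :
    ∃ a b : ℚ, y ∈ Set.Ioo (a:ℝ) (b:ℝ) ∧ Set.Ioo (a:ℝ) (b:ℝ) ⊆ O := by
  obtain ⟨ε, hε, hball⟩ := Metric.isOpen_iff.mp hO y hy
  obtain ⟨a, ha1, ha2⟩ := exists_rat_btwn (show y - ε < y by linarith)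
  obtain ⟨b, hb1, hb2⟩ := exists_rat_btwn (show y < y + ε by linarith)
  refine ⟨a, b, ⟨ha2, hb1⟩, fun z hz => hball ?_⟩
  rw [Real.ball_eq_Ioo]
  exact ⟨by linarith [hz.1], by linarith [hz.2]⟩

lemma cp_box_datum {X : Type*} [TopologicalSpace X] {U : Set (Cp X)} (hU : IsOpen U)
    {f : Cp X} (hf : f ∈ U) :
    ∃ (I : Finset X) (a b : X → ℚ),
      (∀ x ∈ I, (a x : ℝ) < (b x : ℝ)) ∧
      (∀ g : Cp X, (∀ x ∈ I, Cp.toFun g x ∈ Set.Ioo ((a x : ℝ)) ((b x : ℝ))) → g ∈ U) := by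
  classical
  obtain ⟨O, hO, rfl⟩ := isOpen_induced_iff.mp hU
  obtain ⟨I, u, hu, hsub⟩ := isOpen_pi_iff.mp hO (Cp.toFun f) hf
  have h : ∀ x, x ∈ I → ∃ p : ℚ × ℚ, Cp.toFun f x ∈ Set.Ioo (p.1:ℝ) (p.2:ℝ) ∧
      Set.Ioo (p.1:ℝ) (p.2:ℝ) ⊆ u x := by
    intro x hx
    obtain ⟨a, b, h1, h2⟩ := exists_rat_Ioo (hu x hx).1 (hu x hx).2
    exact ⟨⟨a, b⟩, h1, h2⟩
  choose P hPmem hPsub using h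
  refine ⟨I, (fun x => if hx : x ∈ I then (P x hx).1 else 0),
    (fun x => if hx : x ∈ I then (P x hx).2 else 0), ?_, ?_⟩
  · intro x hx
    simp only [dif_pos hx]
    exact lt_trans (hPmem x hx).1 (hPmem x hx).2
  · intro g hg
    refine hsub ?_
    intro x hx
    have hxI : x ∈ I := hx
    have h2 := hg x hxI
    simp only [dif_pos hxI] at h2
    exact hPsub x hxI h2

lemma cp_ccc {X : Type*} [TopologicalSpace X] [T35Space X]
    (F : Set (Set (Cp X))) (hop : ∀ U ∈ F, IsOpen U) (hne : ∀ U ∈ F, Set.Nonempty U)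
    (hdisj : F.Pairwise Disjoint) : F.Countable := by
  classical
  have hdat : ∀ U : F, ∃ (I : Finset X) (ab : (X → ℚ) × (X → ℚ)),
      (∀ x ∈ I, (ab.1 x : ℝ) < (ab.2 x : ℝ)) ∧
      (∀ g : Cp X, (∀ x ∈ I, Cp.toFun g x ∈ Set.Ioo ((ab.1 x : ℝ)) ((ab.2 x : ℝ))) →
        g ∈ (U : Set (Cp X))) := by
    intro U
    obtain ⟨f, hf⟩ := hne U U.2
    obtain ⟨I, a, b, h1, h2⟩ := cp_box_datum (hop U U.2) hf
    exact ⟨I, ⟨a, b⟩, h1, h2⟩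
  choose I ab hab hkey using hdat
  set a : F → X → ℚ := fun U => (ab U).1 with ha
  set b : F → X → ℚ := fun U => (ab U).2 with hb
  set m : F → ℝ≥0∞ := fun U => ∏ x ∈ I U, qmeas (Set.Ioo ((a U x : ℝ)) ((b U x : ℝ))) with hm
  have hmpos : ∀ U, 0 < m U := by
    intro U
    rw [hm]
    rw [CanonicallyOrderedAdd.prod_pos]
    intro x hx
    have h := hab U x hx
    refine qmeas_pos ((a U x + b U x) / 2) ?_
    constructor <;> push_cast <;> linarith
  have hsum : ∀ t : Finset F, (∑ U ∈ t, m U) ≤ 1 := by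
    intro t
    set s : Finset X := t.biUnion (fun U => I U) with hs
    have hIs : ∀ U ∈ t, I U ⊆ s := fun U hU => Finset.subset_biUnion_of_mem _ hU
    set box : F → Set (↥s → ℝ) := fun U => Set.pi Set.univ
      (fun x : ↥s => if (x : X) ∈ I U then Set.Ioo ((a U x : ℝ)) ((b U x : ℝ)) else Set.univ)
      with hbox
    have hmeas : ∀ U, MeasurableSet (box U) := by
      intro U
      refine MeasurableSet.univ_pi (fun x => ?_)
      split
      · exact measurableSet_Ioo
      · exact MeasurableSet.univ
    have hν : ∀ U ∈ t, Measure.pi (fun _ : ↥s => qmeas) (box U) = m U := by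
      intro U hU
      rw [hbox, Measure.pi_pi]
      have heq : ∀ x : ↥s,
          qmeas (if (x:X) ∈ I U then Set.Ioo ((a U x : ℝ)) ((b U x : ℝ)) else Set.univ)
          = (fun y : X => if y ∈ I U then qmeas (Set.Ioo ((a U y : ℝ)) ((b U y : ℝ))) else 1)
            (x : X) := by
        intro x
        by_cases hx : (x:X) ∈ I U
        · simp [hx]
        · simp [hx, qmeas_univ]
      rw [Finset.prod_congr rfl (fun x _ => heq x), Finset.univ_eq_attach,
        Finset.prod_attach s (fun y => if y ∈ I U then qmeas (Set.Ioo ((a U y : ℝ)) ((b U y : ℝ))) else 1),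
        Finset.prod_ite_mem, Finset.inter_eq_right.mpr (hIs U hU)]
    have hdisjbox : (↑t : Set F).PairwiseDisjoint box := by
      intro U hU V hV hUV
      rw [Function.onFun, Set.disjoint_left]
      intro h hU' hV'
      obtain ⟨g, hg⟩ := exists_continuousMap_eqOn s
        (fun x => if hx : x ∈ s then h ⟨x, hx⟩ else 0)
      have hmem : ∀ (W : F), W ∈ t → h ∈ box W → (g : Cp X) ∈ (W : Set (Cp X)) := by
        intro W hW hhW
        apply hkey W
        intro x hx
        have hxs : x ∈ s := hIs W hW hx
        have h1 := hhW ⟨x, hxs⟩ (Set.mem_univ _)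
        simp only [hx, if_true] at h1
        have hgx : Cp.toFun g x = h ⟨x, hxs⟩ := by
          show g x = _
          rw [hg x hxs, dif_pos hxs]
        rw [hgx]
        exact h1
      exact Set.disjoint_left.mp
        (hdisj U.2 V.2 (fun h' => hUV (Subtype.ext h')))
        (hmem U hU hU') (hmem V hV hV')
    calc ∑ U ∈ t, m U = ∑ U ∈ t, Measure.pi (fun _ : ↥s => qmeas) (box U) :=
          Finset.sum_congr rfl (fun U hU => (hν U hU).symm)
      _ = Measure.pi (fun _ : ↥s => qmeas) (⋃ U ∈ t, box U) :=
          (measure_biUnion_finset hdisjbox (fun U _ => hmeas U)).symm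
      _ ≤ 1 := prob_le_one
  have hfin : ∀ n : ℕ, {U : F | ((n+1 : ℕ) : ℝ≥0∞)⁻¹ < m U}.Finite := by
    intro n
    by_contra hinf
    rw [← Set.not_infinite, not_not] at hinf
    obtain ⟨t, hts, hcard⟩ := hinf.exists_subset_card_eq (2 * (n+1))
    have h1 : ((2 * (n+1) : ℕ) : ℝ≥0∞) * ((n+1:ℕ) : ℝ≥0∞)⁻¹ ≤ ∑ U ∈ t, m U := by
      calc ((2 * (n+1) : ℕ) : ℝ≥0∞) * ((n+1:ℕ) : ℝ≥0∞)⁻¹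
          = ∑ _U ∈ t, ((n+1:ℕ) : ℝ≥0∞)⁻¹ := by
            rw [Finset.sum_const, hcard, nsmul_eq_mul]
        _ ≤ ∑ U ∈ t, m U :=
            Finset.sum_le_sum (fun U hU => le_of_lt (hts hU))
    have h2 : ((2 * (n+1) : ℕ) : ℝ≥0∞) * ((n+1:ℕ) : ℝ≥0∞)⁻¹ = 2 := by
      have hne0 : ((n+1:ℕ) : ℝ≥0∞) ≠ 0 := by exact_mod_cast Nat.succ_ne_zero n
      rw [show ((2*(n+1):ℕ):ℝ≥0∞) = 2 * ((n+1:ℕ):ℝ≥0∞) by push_cast; ring,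
        mul_assoc, ENNReal.mul_inv_cancel hne0 (ENNReal.natCast_ne_top _), mul_one]
    rw [h2] at h1
    have := le_trans h1 (hsum t)
    norm_num at this
  have hcover : (Set.univ : Set F) ⊆
      ⋃ n : ℕ, {U : F | ((n+1:ℕ):ℝ≥0∞)⁻¹ < m U} := by
    intro U _
    obtain ⟨k, hk⟩ := ENNReal.exists_inv_nat_lt (hmpos U).ne'
    refine Set.mem_iUnion.mpr ⟨k, lt_of_le_of_lt ?_ hk⟩
    exact ENNReal.inv_le_inv.mpr (by exact_mod_cast Nat.le_succ k)
  have hcu : (Set.univ : Set F).Countable :=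
    Set.Countable.mono hcover (Set.countable_iUnion fun n => (hfin n).countable)
  rw [Set.countable_univ_iff] at hcu
  exact Set.countable_coe_iff.mp hcu

lemma separable_of_ccc {E : Type*} [MetricSpace E]
    (hccc : ∀ F : Set (Set E), (∀ U ∈ F, IsOpen U) → (∀ U ∈ F, U.Nonempty) →
      F.Pairwise Disjoint → F.Countable) :
    SeparableSpace E := by
  classical
  have key : ∀ r : ℝ, 0 < r → ∃ M : Set E, M.Countable ∧ ∀ x : E, ∃ y ∈ M, dist x y < r := by
    intro r hr
    set 𝒜 : Set (Set E) := {s | ∀ x ∈ s, ∀ y ∈ s, x ≠ y → r ≤ dist x y} with h𝒜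
    obtain ⟨M, hM𝒜, hMmax⟩ := zorn_subset 𝒜 (by
      intro c hc hchain
      refine ⟨⋃₀ c, ?_, fun a ha => Set.subset_sUnion_of_mem ha⟩
      intro x hx y hy hxy
      obtain ⟨sx, hsx, hxsx⟩ := hx
      obtain ⟨sy, hsy, hysy⟩ := hy
      rcases hchain.total hsx hsy with hss | hss
      · exact hc hsy x (hss hxsx) y hysy hxy
      · exact hc hsx x hxsx y (hss hysy) hxy)
    have hMc : M.Countable := by
      have himc : ((fun x => Metric.ball x (r/2)) '' M).Countable := by
        refine hccc _ (by rintro U ⟨x, -, rfl⟩; exact Metric.isOpen_ball)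
          (by rintro U ⟨x, -, rfl⟩; exact ⟨x, Metric.mem_ball_self (by linarith)⟩) ?_
        rintro U ⟨x, hx, rfl⟩ V ⟨y, hy, rfl⟩ hUV
        have hxy : x ≠ y := fun h => hUV (by rw [h])
        rw [Set.disjoint_left]
        intro z hz hz'
        have := hM𝒜 x hx y hy hxy
        rw [Metric.mem_ball] at hz hz'
        have : dist x y < r := by
          calc dist x y ≤ dist x z + dist z y := dist_triangle _ _ _
            _ = dist z x + dist z y := by rw [dist_comm z x]
            _ < r/2 + r/2 := by exact add_lt_add hz hz'
            _ = r := by ring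
        linarith [hM𝒜 x hx y hy hxy]
      refine Set.countable_of_injective_of_countable_image ?_ himc
      intro x hx y hy hxy
      by_contra hne
      have hxy' : Metric.ball x (r/2) = Metric.ball y (r/2) := hxy
      have h1 : x ∈ Metric.ball x (r/2) := Metric.mem_ball_self (by linarith)
      rw [hxy', Metric.mem_ball] at h1
      have h2 := hM𝒜 x hx y hy hne
      linarith
    refine ⟨M, hMc, ?_⟩
    intro x
    by_cases hxM : x ∈ M
    · exact ⟨x, hxM, by simpa using hr⟩
    by_contra hno
    push_neg at hno
    have : insert x M ∈ 𝒜 := by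
      intro u hu v hv huv
      rcases hu with rfl | hu
      · rcases hv with rfl | hv
        · exact absurd rfl huv
        · exact hno v hv
      · rcases hv with rfl | hv
        · rw [dist_comm]
          exact hno u hu
        · exact hM𝒜 u hu v hv huv
    exact hxM (hMmax this (Set.subset_insert _ _) (Set.mem_insert x M))
  choose M hMc hMd using fun n : ℕ => key (1/(n+1)) (by positivity)
  refine ⟨⟨⋃ n, M n, Set.countable_iUnion hMc, ?_⟩⟩
  rw [Metric.dense_iff]
  intro x r hr
  obtain ⟨n, hn⟩ := exists_nat_one_div_lt hr
  obtain ⟨y, hy, hxy⟩ := hMd n x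
  exact ⟨y, Metric.mem_ball'.mpr (by exact lt_trans hxy (by exact_mod_cast hn)), Set.mem_iUnion.mpr ⟨n, hy⟩⟩

end Aux

/-- Every metrizable locally convex space which is the image of `C_p(X)` (`X` Tychonoff)
under a continuous linear surjection (in particular every metrizable quotient of `C_p(X)`
by a closed vector subspace) is separable. -/
theorem stmt_17 (X : Type*) [TopologicalSpace X] [T35Space X]
    (E : Type*) [AddCommGroup E] [Module ℝ E] [TopologicalSpace E]
    [MetrizableSpace E] [LocallyConvexSpace ℝ E]
    (T : Cp X →L[ℝ] E) (hsurj : Function.Surjective T) :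
    SeparableSpace E := by
  letI : MetricSpace E := TopologicalSpace.metrizableSpaceMetric E
  refine separable_of_ccc ?_
  intro F hop hne hdisj
  have himc : ((fun U => T ⁻¹' U) '' F).Countable := by
    refine cp_ccc _ ?_ ?_ ?_
    · rintro V ⟨U, hU, rfl⟩
      exact (hop U hU).preimage T.continuous
    · rintro V ⟨U, hU, rfl⟩
      obtain ⟨e, he⟩ := hne U hU
      obtain ⟨f, rfl⟩ := hsurj e
      exact ⟨f, he⟩
    · rintro V ⟨U, hU, rfl⟩ W ⟨U', hU', rfl⟩ hVW
      exact Disjoint.preimage _ (hdisj hU hU' (fun h => hVW (by rw [h])))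
  exact Set.countable_of_injective_of_countable_image
    (fun U hU V hV h => hsurj.preimage_injective h) himc
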